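/- Suppose Γ(R,U) is connected, and Γ(R,S) is a U-unitary Cayley graph that is connected and whose complement graph is also connected. Then Γ(R,S) is not prime if and only if there exists an ideal I of R with I ≠ 0 and I ≠ R such that the underlying set of I is a homogeneous set in Γ(R,S). -/

import Mathlib

open Pointwise

/-- The Cayley graph of a subset `S` of an additive group: distinct `x, y` are adjacent
iff `x - y ∈ S` (for a symmetric `S` this coincides with the usual definition). -/
def cayleyGraph {G : Type*} [AddCommGroup G] (S : Set G) : SimpleGraph G :=
  SimpleGraph.fromRel (fun x y => x - y ∈ S)

/-- A set `X` of vertices of a graph is homogeneous if every vertex outside `X` is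
adjacent either to all vertices of `X` or to none of them. -/
def IsHomogeneous {V : Type*} (G : SimpleGraph V) (X : Set V) : Prop :=
  ∀ v ∉ X, (∀ x ∈ X, G.Adj v x) ∨ (∀ x ∈ X, ¬ G.Adj v x)

/-- A graph is prime if it has no nontrivial homogeneous set, i.e. no homogeneous set `X`
with `2 ≤ |X|` and `X` a proper subset of the vertex set. -/
def IsPrimeGraph {V : Type*} (G : SimpleGraph V) : Prop :=
  ¬ ∃ X : Set V, 2 ≤ X.ncard ∧ X ≠ Set.univ ∧ IsHomogeneous G X

lemma cayley_adj {G : Type*} [AddCommGroup G] {S : Set G} {x y : G} :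
    (cayleyGraph S).Adj x y ↔ x ≠ y ∧ (x - y ∈ S ∨ y - x ∈ S) := by
  simp [cayleyGraph, SimpleGraph.fromRel_adj]

lemma reach_mem_closure {G : Type*} [AddCommGroup G] {T : Set G} {x y : G}
    (h : (cayleyGraph T).Reachable x y) : y - x ∈ AddSubgroup.closure T := by
  obtain ⟨w⟩ := h
  induction w with
  | nil => simpa using zero_mem (AddSubgroup.closure T)
  | @cons a b c h p ih =>
      have hb : b - a ∈ AddSubgroup.closure T := by
        rcases (cayley_adj.mp h).2 with h1 | h1
        · have := AddSubgroup.subset_closure h1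
          simpa using neg_mem this
        · exact AddSubgroup.subset_closure h1
      rw [← sub_add_sub_cancel c b a]
      exact add_mem ih hb

lemma reach_stay {V : Type*} {G : SimpleGraph V} {A : Set V}
    (hA : ∀ x ∈ A, ∀ y, G.Adj x y → y ∈ A) {u v : V}
    (h : G.Reachable u v) : u ∈ A → v ∈ A := by
  obtain ⟨w⟩ := h
  induction w with
  | nil => exact id
  | cons h p ih => exact fun hu => ih (hA _ hu _ h)

lemma homog_union {V : Type*} {G : SimpleGraph V} {M N : Set V}
    (hM : IsHomogeneous G M) (hN : IsHomogeneous G N) (h : (M ∩ N).Nonempty) :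
    IsHomogeneous G (M ∪ N) := by
  obtain ⟨w, hwM, hwN⟩ := h
  intro v hv
  rw [Set.mem_union] at hv; push_neg at hv
  rcases hM v hv.1 with h1 | h1 <;> rcases hN v hv.2 with h2 | h2
  · left; rintro x (hx | hx); exacts [h1 x hx, h2 x hx]
  · exact absurd (h1 w hwM) (h2 w hwN)
  · exact absurd (h2 w hwN) (h1 w hwM)
  · right; rintro x (hx | hx); exacts [h1 x hx, h2 x hx]

lemma homog_image {V : Type*} {G : SimpleGraph V} {M : Set V} (hM : IsHomogeneous G M)
    (f : V ≃ V) (hf : ∀ x y, G.Adj (f x) (f y) ↔ G.Adj x y) :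
    IsHomogeneous G (f '' M) := by
  intro v hv
  have hv' : f.symm v ∉ M := fun h => hv ⟨_, h, f.apply_symm_apply v⟩
  rcases hM _ hv' with h | h
  · left; rintro x ⟨m, hm, rfl⟩
    have := (hf (f.symm v) m).mpr (h m hm)
    rwa [f.apply_symm_apply] at this
  · right; rintro x ⟨m, hm, rfl⟩ hadj
    rw [← f.apply_symm_apply v] at hadj
    exact h m hm ((hf (f.symm v) m).mp hadj)

lemma cover_contra {V : Type*} {G : SimpleGraph V} (hc : G.Connected) (hcc : Gᶜ.Connected)
    {M N : Set V} (hM : IsHomogeneous G M) (hN : IsHomogeneous G N)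
    (hMu : M ≠ Set.univ) (hNu : N ≠ Set.univ) (hMN : (M ∩ N).Nonempty)
    (hUn : M ∪ N = Set.univ) : False := by
  obtain ⟨w, hwM, hwN⟩ := hMN
  have hmem : ∀ z : V, z ∈ M ∨ z ∈ N := by
    intro z
    have : z ∈ M ∪ N := hUn ▸ Set.mem_univ z
    exact this
  obtain ⟨a, haN⟩ : ∃ a, a ∉ N := by
    by_contra hcon; push_neg at hcon
    exact hNu (Set.eq_univ_iff_forall.mpr hcon)
  have haM : a ∈ M := (hmem a).resolve_right haN
  obtain ⟨b, hbM⟩ : ∃ b, b ∉ M := by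
    by_contra hcon; push_neg at hcon
    exact hMu (Set.eq_univ_iff_forall.mpr hcon)
  have hbN : b ∈ N := (hmem b).resolve_left hbM
  rcases hN a haN with ha | ha
  · -- a adjacent to all of N; show Gᶜ disconnected via M ∩ N closed
    have step1 : ∀ b', b' ∈ N → b' ∉ M → ∀ m ∈ M, G.Adj b' m := by
      intro b' hb'N hb'M
      rcases hM b' hb'M with h | h
      · exact h
      · exact absurd ((ha b' hb'N).symm) (h a haM)
    have step2 : ∀ a', a' ∈ M → a' ∉ N → ∀ n ∈ N, G.Adj a' n := by
      intro a' ha'M ha'N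
      rcases hN a' ha'N with h | h
      · exact h
      · exact absurd ((step1 b hbN hbM a' ha'M).symm) (h b hbN)
    have hclosed : ∀ x ∈ M ∩ N, ∀ y, Gᶜ.Adj x y → y ∈ M ∩ N := by
      intro x hx y hxy
      by_contra hy
      have hadj : G.Adj y x := by
        rcases hmem y with hyM | hyN
        · have hyN : y ∉ N := fun hyN => hy ⟨hyM, hyN⟩
          exact step2 y hyM hyN x hx.2
        · have hyM : y ∉ M := fun hyM => hy ⟨hyM, hyN⟩
          exact step1 y hyN hyM x hx.1
      exact hxy.2 hadj.symm
    have : b ∈ M ∩ N := reach_stay hclosed (hcc.preconnected w b) ⟨hwM, hwN⟩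
    exact hbM this.1
  · -- a adjacent to nothing in N; show G disconnected
    have step1 : ∀ b', b' ∈ N → b' ∉ M → ∀ m ∈ M, ¬ G.Adj b' m := by
      intro b' hb'N hb'M
      rcases hM b' hb'M with h | h
      · exact absurd (h a haM).symm (ha b' hb'N)
      · exact h
    have step2 : ∀ a', a' ∈ M → a' ∉ N → ∀ n ∈ N, ¬ G.Adj a' n := by
      intro a' ha'M ha'N
      rcases hN a' ha'N with h | h
      · exact absurd (h b hbN).symm (step1 b hbN hbM a' ha'M)
      · exact h
    have hclosed : ∀ x ∈ M ∩ N, ∀ y, G.Adj x y → y ∈ M ∩ N := by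
      intro x hx y hxy
      by_contra hy
      rcases hmem y with hyM | hyN
      · have hyN : y ∉ N := fun hyN => hy ⟨hyM, hyN⟩
        exact step2 y hyM hyN x hx.2 hxy.symm
      · have hyM : y ∉ M := fun hyM => hy ⟨hyM, hyN⟩
        exact step1 y hyN hyM x hx.1 hxy.symm
    have : b ∈ M ∩ N := reach_stay hclosed (hc.preconnected w b) ⟨hwM, hwN⟩
    exact hbM this.1

lemma eq_univ_of_image_eq_univ {V : Type*} (f : V ≃ V) {M : Set V}
    (h : f '' M = Set.univ) : M = Set.univ := by
  have := congrArg (fun t => f ⁻¹' t) h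
  simpa [Equiv.preimage_image] using this


/-- Suppose `Γ(R,U)` is connected and `Γ(R,S)` is a `U`-unitary Cayley
graph that is connected and anti-connected. Then `Γ(R,S)` is not prime iff there exists a
proper nonzero ideal `I` of `R` whose underlying set is homogeneous in `Γ(R,S)`. -/
theorem stmt6 {R : Type*} [CommRing R] [Fintype R]
    (U : Subgroup Rˣ) (hU : (-1 : Rˣ) ∈ U)
    (S : Set R) (hSsymm : ∀ s ∈ S, -s ∈ S) (hS0 : (0 : R) ∉ S)
    (hstable : ∀ u ∈ U, (u : R) • S = S)
    (hconnU : (cayleyGraph ((fun u : Rˣ => (u : R)) '' (U : Set Rˣ))).Connected)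
    (hconnS : (cayleyGraph S).Connected)
    (hanti : ((cayleyGraph S)ᶜ).Connected) :
    ¬ IsPrimeGraph (cayleyGraph S) ↔
      ∃ I : Ideal R, I ≠ ⊥ ∧ I ≠ ⊤ ∧ IsHomogeneous (cayleyGraph S) (I : Set R) := by
  set G := cayleyGraph S with hG
  constructor
  · intro hnp
    rw [IsPrimeGraph, not_not] at hnp
    obtain ⟨X, hX2, hXuniv, hXhom⟩ := hnp
    -- translation invariance of adjacency
    have htrans : ∀ g x y : R, G.Adj (x + g) (y + g) ↔ G.Adj x y := by
      intro g x y
      simp only [hG, cayley_adj, add_sub_add_right_eq_sub, ne_eq, add_left_inj]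
    -- scaling invariance
    have hscale : ∀ u ∈ U, ∀ x y : R, G.Adj ((u : R) * x) ((u : R) * y) ↔ G.Adj x y := by
      intro u hu x y
      have hmem : ∀ z : R, (u : R) * z ∈ S ↔ z ∈ S := by
        intro z
        constructor
        · intro hz
          have h1 : ((u⁻¹ : Rˣ) : R) • ((u : R) * z) ∈ ((u⁻¹ : Rˣ) : R) • S :=
            Set.smul_mem_smul_set hz
          rw [hstable _ (inv_mem hu)] at h1
          simpa [smul_eq_mul, ← mul_assoc] using h1
        · intro hz
          rw [← hstable u hu]
          exact ⟨z, hz, rfl⟩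
      have hinj : ∀ a b : R, (u : R) * a = (u : R) * b ↔ a = b := by
        intro a b
        constructor
        · intro h
          have := congrArg (fun t => ((u⁻¹ : Rˣ) : R) * t) h
          simpa [← mul_assoc] using this
        · intro h; rw [h]
      simp only [hG, cayley_adj, ne_eq, hinj, ← mul_sub, hmem]
    -- the family of candidate homogeneous sets
    set P : Set (Set R) := {M | IsHomogeneous G M ∧ (0 : R) ∈ M ∧ 2 ≤ M.ncard ∧ M ≠ Set.univ}
      with hP
    -- P is nonempty: translate X
    have hPne : P.Nonempty := by
      obtain ⟨x₀, hx₀⟩ : X.Nonempty := by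
        rcases Set.eq_empty_or_nonempty X with h | h
        · rw [h] at hX2; simp at hX2
        · exact h
      refine ⟨(Equiv.addRight (-x₀)) '' X, ?_, ?_, ?_, ?_⟩
      · exact homog_image hXhom _ (fun x y => htrans (-x₀) x y)
      · exact ⟨x₀, hx₀, by simp⟩
      · rwa [Set.ncard_image_of_injective _ (Equiv.injective _)]
      · exact fun h => hXuniv (eq_univ_of_image_eq_univ _ h)
    obtain ⟨M, hMP, hMmax⟩ :=
      Set.Finite.exists_maximalFor Set.ncard P (Set.toFinite P) hPne
    obtain ⟨hMhom, hM0, hM2, hMuniv⟩ := hMP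
    -- key absorption: any member of P whose union with M covers it gets absorbed
    have habsorb : ∀ N : Set R, IsHomogeneous G N → (0 : R) ∈ N → N.ncard = M.ncard →
        N ≠ Set.univ → N ⊆ M := by
      intro N hNhom hN0 hNcard hNuniv
      have hover : (M ∩ N).Nonempty := ⟨0, hM0, hN0⟩
      have hUhom : IsHomogeneous G (M ∪ N) := homog_union hMhom hNhom hover
      have hUne : M ∪ N ≠ Set.univ := by
        intro h
        exact cover_contra hconnS hanti hMhom hNhom hMuniv hNuniv hover h
      have hUP : M ∪ N ∈ P := by
        refine ⟨hUhom, Or.inl hM0, le_trans hM2 ?_, hUne⟩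
        exact Set.ncard_le_ncard Set.subset_union_left (Set.toFinite _)
      have hle : M.ncard ≤ (M ∪ N).ncard :=
        Set.ncard_le_ncard Set.subset_union_left (Set.toFinite _)
      have heq : M.ncard = (M ∪ N).ncard := le_antisymm hle (hMmax hUP hle)
      have : M = M ∪ N :=
        Set.eq_of_subset_of_ncard_le Set.subset_union_left heq.ge (Set.toFinite _)
      intro x hx
      rw [this]; exact Or.inr hx
    -- M is closed under subtracting its elements
    have hsub : ∀ g ∈ M, ∀ m ∈ M, m - g ∈ M := by
      intro g hg m hm
      have hsubset : (Equiv.addRight (-g)) '' M ⊆ M := by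
        apply habsorb
        · exact homog_image hMhom _ (fun x y => htrans (-g) x y)
        · exact ⟨g, hg, by simp⟩
        · rw [Set.ncard_image_of_injective _ (Equiv.injective _)]
        · exact fun h => hMuniv (eq_univ_of_image_eq_univ _ h)
      have : m + (-g) ∈ M := hsubset ⟨m, hm, rfl⟩
      simpa [sub_eq_add_neg] using this
    have hneg : ∀ m ∈ M, -m ∈ M := by
      intro m hm
      simpa using hsub m hm 0 hM0
    have hadd : ∀ a ∈ M, ∀ b ∈ M, a + b ∈ M := by
      intro a ha b hb
      have := hsub (-b) (hneg b hb) a ha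
      simpa [sub_neg_eq_add] using this
    -- M is closed under multiplication by U
    have hUmul : ∀ u ∈ U, ∀ m ∈ M, (u : R) * m ∈ M := by
      intro u hu m hm
      have hsubset : (MulAction.toPerm u) '' M ⊆ M := by
        apply habsorb
        · apply homog_image hMhom
          intro x y
          have : ∀ z : R, (MulAction.toPerm u) z = (u : R) * z := fun z => Units.smul_def u z
          rw [this, this]
          exact hscale u hu x y
        · exact ⟨0, hM0, by simp [Units.smul_def]⟩
        · rw [Set.ncard_image_of_injective _ (Equiv.injective _)]
        · exact fun h => hMuniv (eq_univ_of_image_eq_univ _ h)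
      have : (MulAction.toPerm u) m ∈ M := hsubset ⟨m, hm, rfl⟩
      simpa [Units.smul_def] using this
    -- U generates R additively
    have hgen : ∀ r : R, r ∈ AddSubgroup.closure ((fun u : Rˣ => (u : R)) '' (U : Set Rˣ)) := by
      intro r
      have := reach_mem_closure (hconnU.preconnected 0 r)
      simpa using this
    -- hence M is closed under multiplication by everything
    have hmul : ∀ r : R, ∀ m ∈ M, r * m ∈ M := by
      intro r m hm
      set T : AddSubgroup R :=
        { carrier := {r : R | ∀ x ∈ M, r * x ∈ M}
          zero_mem' := by intro x hx; simpa using hM0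
          add_mem' := by
            intro a b ha hb x hx
            rw [add_mul]
            exact hadd _ (ha x hx) _ (hb x hx)
          neg_mem' := by
            intro a ha x hx
            rw [neg_mul]
            exact hneg _ (ha x hx) } with hT
      have hsub2 : ((fun u : Rˣ => (u : R)) '' (U : Set Rˣ)) ⊆ T := by
        rintro _ ⟨u, hu, rfl⟩ x hx
        exact hUmul u hu x hx
      have : AddSubgroup.closure ((fun u : Rˣ => (u : R)) '' (U : Set Rˣ)) ≤ T :=
        (AddSubgroup.closure_le T).mpr hsub2
      exact this (hgen r) m hm
    -- package as an ideal
    refine ⟨{ carrier := M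
              zero_mem' := hM0
              add_mem' := fun ha hb => hadd _ ha _ hb
              smul_mem' := fun r x hx => hmul r x hx }, ?_, ?_, ?_⟩
    · rw [Submodule.ne_bot_iff]
      obtain ⟨a, b, ha, hb, hab⟩ := (Set.one_lt_ncard_iff (Set.toFinite M)).mp hM2
      by_cases h0 : a = 0
      · exact ⟨b, hb, fun h => hab (by rw [h0, h])⟩
      · exact ⟨a, ha, h0⟩
    · intro h
      apply hMuniv
      have : M = ((⊤ : Ideal R) : Set R) := congrArg (fun I : Ideal R => (I : Set R)) h
      simpa using this
    · exact hMhom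
  · rintro ⟨I, hbot, htop, hhom⟩
    rw [IsPrimeGraph, not_not]
    refine ⟨(I : Set R), ?_, ?_, hhom⟩
    · obtain ⟨x, hxI, hx0⟩ := Submodule.ne_bot_iff I |>.mp hbot
      have hpair : ({0, x} : Set R) ⊆ (I : Set R) := by
        rintro y (rfl | rfl)
        · exact I.zero_mem
        · exact hxI
      calc 2 = ({0, x} : Set R).ncard := (Set.ncard_pair (Ne.symm hx0)).symm
        _ ≤ (I : Set R).ncard := Set.ncard_le_ncard hpair (Set.toFinite _)
    · intro h
      apply htop
      rw [Ideal.eq_top_iff_one]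
      rw [Set.eq_univ_iff_forall] at h
      exact h 1
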